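/- arXiv:1701.08593 — 2 statements merged into one kernel-verified Lean document; each statement's English description precedes it below -/
import Mathlib

section
/- Let X be a separable metric space carrying a measure μ which is s-regular on X with constants a_μ, b_μ and scale r_μ. Suppose A ⊆ X satisfies por(A,x,r) > ρ for all x ∈ A and all 0 < r < r_p, where 0 < ρ ≤ 1 and r_p > 0. Set l = (1/2)(a_μ/b_μ)^{1/s} and D = 2(1−l)^{-1} l^{-2}, and let k_0 ∈ ℕ be such that D^{-k_0} < min{r_p, r_μ}. Then A is ((1/3) l^2 ρ, D, 1, 1, k_0)-mean porous. -/
open Metric MeasureTheory Set Filter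
open scoped ENNReal NNReal Topology

/-- `por A x r`: the porosity of `A` at the point `x` at scale `r`, defined as
`sup {ρ ≥ 0 : ∃ y, B(y, ρr) ∩ A = ∅ and ρr + d(x,y) ≤ r}` (closed balls). -/
noncomputable def por {X : Type*} [MetricSpace X] (A : Set X) (x : X) (r : ℝ) : ℝ :=
  sSup {ρ : ℝ | 0 ≤ ρ ∧ ∃ y : X, closedBall y (ρ * r) ∩ A = ∅ ∧ ρ * r + dist x y ≤ r}

/-- `porAt A x = liminf_{r ↓ 0} por A x r`. -/
noncomputable def porAt {X : Type*} [MetricSpace X] (A : Set X) (x : X) : ℝ :=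
  Filter.liminf (fun r => por A x r) (nhdsWithin (0 : ℝ) (Set.Ioi 0))

/-- `porosity A = inf_{x ∈ A} porAt A x`. -/
noncomputable def porosity {X : Type*} [MetricSpace X] (A : Set X) : ℝ :=
  sInf (porAt A '' A)

open scoped Classical in
/-- `porCount A ρ D k₀ n x = S_{k₀,n}(x)`: the number of `k ∈ {k₀+1, …, k₀+n}` such that
the annulus `A_k(x) = {y : D^{-k} < d(x,y) ≤ D^{-k+1}}` contains a point `y` with
`dist(y,A) ≥ ρ d(y,x)`. -/
noncomputable def porCount {X : Type*} [MetricSpace X] (A : Set X) (ρ D : ℝ)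
    (k₀ n : ℕ) (x : X) : ℕ :=
  ∑ k ∈ Finset.Icc (k₀ + 1) (k₀ + n),
    if ∃ y : X, (D ^ (-(k : ℝ)) < dist x y ∧ dist x y ≤ D ^ (-(k : ℝ) + 1)) ∧
        ρ * dist y x ≤ Metric.infDist y A then 1 else 0

/-- `A` is `(ρ, D, p, n₀, k₀)`-mean porous: `S_{k₀,n}(x) ≥ p n` for all `x ∈ A`, `n ≥ n₀`. -/
def MeanPorous {X : Type*} [MetricSpace X] (A : Set X) (ρ D p : ℝ) (n₀ k₀ : ℕ) : Prop :=
  ∀ x ∈ A, ∀ n : ℕ, n₀ ≤ n → p * (n : ℝ) ≤ (porCount A ρ D k₀ n x : ℝ)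

/-- `μ` is `s`-regular on `E` with constants `a ≤ b` and scale `rμ`:
`a r^s ≤ μ(B(x,r)) ≤ b r^s` for all `x ∈ E` and `0 < r < rμ`. -/
def IsRegularOn {X : Type*} [MetricSpace X] [MeasurableSpace X]
    (μ : Measure X) (s : ℝ) (E : Set X) (a b rμ : ℝ) : Prop :=
  ∀ x ∈ E, ∀ r : ℝ, 0 < r → r < rμ →
    ENNReal.ofReal (a * r ^ s) ≤ μ (closedBall x r) ∧
      μ (closedBall x r) ≤ ENNReal.ofReal (b * r ^ s)

private lemma le_infDist_aux {X : Type*} [MetricSpace X] {s : Set X} (hs : s.Nonempty)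
    {x : X} {c : ℝ} (h : ∀ y ∈ s, c ≤ dist x y) : c ≤ Metric.infDist x s := by
  by_contra hc
  push_neg at hc
  obtain ⟨y, hy, hlt⟩ := (Metric.infDist_lt_iff hs).mp hc
  exact absurd (h y hy) (not_le.mpr hlt)

set_option maxHeartbeats 1600000 in
/-- Suppose `μ` is `s`-regular on `X` and `por A x r > ρ` for all
`x ∈ A` and `0 < r < r_p`. Set `l = (1/2)(a_μ/b_μ)^{1/s}` and `D = 2(1-l)⁻¹ l⁻²`, and let
`k₀ ∈ ℕ` satisfy `D^{-k₀} < min{r_p, r_μ}`. Then `A` is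
`((1/3) l² ρ, D, 1, 1, k₀)`-mean porous. -/
theorem stmt17 {X : Type*} [MetricSpace X] [TopologicalSpace.SeparableSpace X]
    [MeasurableSpace X] [BorelSpace X] (μ : Measure X) (s a b rμ : ℝ)
    (hs : 0 < s) (ha : 0 < a) (hab : a ≤ b) (hrμ : 0 < rμ)
    (hreg : IsRegularOn μ s (Set.univ : Set X) a b rμ)
    (A : Set X) (ρ rp : ℝ) (hρ : 0 < ρ) (hρ1 : ρ ≤ 1) (hrp : 0 < rp)
    (hpor : ∀ x ∈ A, ∀ r : ℝ, 0 < r → r < rp → ρ < por A x r)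
    (l D : ℝ) (hl : l = 1 / 2 * (a / b) ^ (1 / s)) (hD : D = 2 * (1 - l)⁻¹ * (l ^ 2)⁻¹)
    (k₀ : ℕ) (hk₀ : D ^ (-(k₀ : ℝ)) < min rp rμ) :
    MeanPorous A (1 / 3 * l ^ 2 * ρ) D 1 1 k₀ := by
  intro x hxA n hn
  have hAne : A.Nonempty := ⟨x, hxA⟩
  have hb : (0:ℝ) < b := lt_of_lt_of_le ha hab
  have hl0 : 0 < l := by
    rw [hl]
    have := Real.rpow_pos_of_pos (div_pos ha hb) (1/s)
    linarith
  have hlhalf : l ≤ 1/2 := by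
    rw [hl]
    have h1 : (a/b) ^ (1/s) ≤ 1 :=
      Real.rpow_le_one (le_of_lt (div_pos ha hb)) ((div_le_one hb).mpr hab) (by positivity)
    nlinarith
  have h1l : (0:ℝ) < 1 - l := by linarith
  have hD0 : 0 < D := by
    rw [hD]
    exact mul_pos (mul_pos two_pos (inv_pos.mpr h1l)) (inv_pos.mpr (pow_pos hl0 2))
  have h1D : D⁻¹ = (1 - l) * l ^ 2 / 2 := by
    rw [hD]
    field_simp
  have hDinvle : D⁻¹ ≤ 1/8 := by rw [h1D]; nlinarith
  have hD8 : (8:ℝ) ≤ D := by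
    have h2 := mul_le_mul_of_nonneg_left hDinvle hD0.le
    rw [mul_inv_cancel₀ hD0.ne'] at h2
    linarith
  have hD1 : (1:ℝ) < D := by linarith
  have hρ'0 : (0:ℝ) ≤ 1 / 3 * l ^ 2 * ρ :=
    mul_nonneg (mul_nonneg (by norm_num) (sq_nonneg l)) hρ.le
  -- uniform perfectness from s-regularity
  have hperf : ∀ (w : X) (t : ℝ), 0 < t → t < rμ → ∃ z : X, l * t < dist w z ∧ dist w z ≤ t := by
    intro w t ht htμ
    by_contra hc
    push_neg at hc
    have hsub : closedBall w t ⊆ closedBall w (l * t) := by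
      intro z hz
      rw [mem_closedBall] at hz ⊢
      by_contra h
      push_neg at h
      have h2 := hc z (by rwa [dist_comm])
      rw [dist_comm] at h2
      linarith
    have h1 := (hreg w (mem_univ w) t ht htμ).1
    have h2 := (hreg w (mem_univ w) (l*t) (by positivity) (by nlinarith)).2
    have h3 : μ (closedBall w t) ≤ μ (closedBall w (l*t)) := measure_mono hsub
    have h4 : ENNReal.ofReal (a * t ^ s) ≤ ENNReal.ofReal (b * (l*t) ^ s) :=
      le_trans h1 (le_trans h3 h2)
    have h5 : a * t ^ s ≤ b * (l*t) ^ s := by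
      refine (ENNReal.ofReal_le_ofReal_iff ?_).mp h4
      have : (0:ℝ) < (l*t) ^ s := Real.rpow_pos_of_pos (by positivity) s
      positivity
    have h6 : (l*t) ^ s = l ^ s * t ^ s := Real.mul_rpow hl0.le ht.le
    have h7 : l ^ s = (1/2 : ℝ) ^ s * (a/b) := by
      rw [hl, Real.mul_rpow (by norm_num) (Real.rpow_nonneg (by positivity) _)]
      congr 1
      rw [← Real.rpow_mul (by positivity), one_div_mul_cancel hs.ne', Real.rpow_one]
    have hba : b * ((1/2:ℝ) ^ s * (a/b) * t ^ s) = (1/2:ℝ) ^ s * (a * t ^ s) := by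
      field_simp
    have h8 : a * t ^ s ≤ (1/2:ℝ) ^ s * (a * t ^ s) := by
      calc a * t ^ s ≤ b * (l ^ s * t ^ s) := by rw [← h6]; exact h5
        _ = (1/2:ℝ) ^ s * (a * t ^ s) := by rw [h7, ← hba]
    have hhalf : (1/2:ℝ) ^ s < 1 := Real.rpow_lt_one (by norm_num) (by norm_num) hs
    have hts : (0:ℝ) < t ^ s := Real.rpow_pos_of_pos ht s
    nlinarith [mul_pos ha hts]
  -- the key claim: every annulus contains a good pore point
  have key : ∀ k ∈ Finset.Icc (k₀ + 1) (k₀ + n),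
      ∃ y : X, (D ^ (-(k : ℝ)) < dist x y ∧ dist x y ≤ D ^ (-(k : ℝ) + 1)) ∧
        1 / 3 * l ^ 2 * ρ * dist y x ≤ Metric.infDist y A := by
    intro k hk
    rw [Finset.mem_Icc] at hk
    have hk1 : k₀ + 1 ≤ k := hk.1
    set T : ℝ := D ^ (-(k:ℝ) + 1) with hT
    have hT0 : 0 < T := Real.rpow_pos_of_pos hD0 _
    have hNk : D ^ (-(k:ℝ)) = T * D⁻¹ := by
      rw [hT, ← Real.rpow_neg_one D, ← Real.rpow_add hD0]
      congr 1
      ring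
    have hTu : T ≤ D ^ (-(k₀:ℝ)) := by
      apply Real.rpow_le_rpow_of_exponent_le hD1.le
      have : (k₀:ℝ) + 1 ≤ (k:ℝ) := by exact_mod_cast hk1
      linarith
    have hTrp : T < rp := lt_of_le_of_lt hTu (hk₀.trans_le (min_le_left _ _))
    have hTrμ : T < rμ := lt_of_le_of_lt hTu (hk₀.trans_le (min_le_right _ _))
    set r : ℝ := 1/3 * l ^ 2 * T with hr
    have hl2pos : (0:ℝ) < l ^ 2 := pow_pos hl0 2
    have hl2q : l ^ 2 ≤ 1/4 := by nlinarith
    have hr0 : 0 < r := by rw [hr]; nlinarith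
    have hrT : r ≤ 1/12 * T := by rw [hr]; nlinarith
    by_cases hcase : ∃ u ∈ A, T * D⁻¹ + 2*r ≤ dist x u ∧ dist x u ≤ T - r
    · -- a point of A in the middle region: use porosity at u
      obtain ⟨u, huA, hu1, hu2⟩ := hcase
      have hrrp : r < rp := by linarith
      have hp := hpor u huA r hr0 hrrp
      simp only [por] at hp
      have hex : ∃ σ, (0 ≤ σ ∧ ∃ y : X, closedBall y (σ*r) ∩ A = ∅ ∧ σ*r + dist u y ≤ r)
          ∧ ρ < σ := by
        by_contra hcon
        push_neg at hcon
        have hle := Real.sSup_le (fun σ hσ => hcon σ hσ) hρ.le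
        exact absurd hp (not_lt.mpr hle)
      obtain ⟨σ, ⟨hσ0, y, hyA, hyd⟩, hρσ⟩ := hex
      have hσr : 0 ≤ σ * r := mul_nonneg hσ0 hr0.le
      have hduy : dist u y ≤ r := by linarith
      have hinf : σ * r ≤ Metric.infDist y A := by
        apply le_infDist_aux hAne
        intro v hv
        by_contra hlt
        push_neg at hlt
        have hmem : v ∈ closedBall y (σ*r) ∩ A :=
          ⟨by rw [mem_closedBall, dist_comm]; linarith, hv⟩
        rw [hyA] at hmem
        exact hmem
      have htri1 := dist_triangle x y u
      have htri2 := dist_triangle x u y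
      rw [dist_comm y u] at htri1
      refine ⟨y, ⟨?_, ?_⟩, ?_⟩
      · rw [hNk]; linarith
      · linarith
      · rw [dist_comm y x]
        have h1 : dist x y ≤ T := by linarith
        have h2 : 1/3 * l ^ 2 * ρ * dist x y ≤ 1/3 * l ^ 2 * ρ * T :=
          mul_le_mul_of_nonneg_left h1 hρ'0
        have h3 : 1/3 * l ^ 2 * ρ * T = ρ * r := by rw [hr]; ring
        have h4 : ρ * r ≤ σ * r := mul_le_mul_of_nonneg_right hρσ.le hr0.le
        linarith
    · -- the middle region misses A: use a uniform perfectness point of x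
      push_neg at hcase
      set t : ℝ := (1 - 2/3 * l ^ 2) * T with htdef
      have ht0 : 0 < t := by rw [htdef]; nlinarith
      have htT : t ≤ T := by rw [htdef]; nlinarith
      have htrμ : t < rμ := lt_of_le_of_lt htT hTrμ
      obtain ⟨z, hz1, hz2⟩ := hperf x t ht0 htrμ
      have hlt_lb : T * D⁻¹ + 3 * r ≤ l * t := by
        rw [h1D, hr, htdef]
        nlinarith [mul_pos hT0 hl0, mul_nonneg (mul_nonneg hT0.le hl0.le) (sub_nonneg.mpr hlhalf),
          mul_nonneg (mul_nonneg (mul_nonneg hT0.le hl0.le) hl0.le) (sub_nonneg.mpr hlhalf),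
          mul_nonneg hT0.le (sq_nonneg l)]
      have hzxT : dist x z ≤ T := le_trans hz2 htT
      refine ⟨z, ⟨?_, ?_⟩, ?_⟩
      · rw [hNk]; linarith
      · exact hzxT
      · rw [dist_comm z x]
        have hρ'T : 1/3 * l ^ 2 * ρ * dist x z ≤ r := by
          have h2 : 1/3 * l ^ 2 * ρ * dist x z ≤ 1/3 * l ^ 2 * ρ * T :=
            mul_le_mul_of_nonneg_left hzxT hρ'0
          have h3 : 1/3 * l ^ 2 * ρ * T ≤ r := by rw [hr]; nlinarith
          linarith
        apply le_infDist_aux hAne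
        intro v hv
        by_cases hv1 : T * D⁻¹ + 2*r ≤ dist x v
        · have hv2 := hcase v hv hv1
          have htri := dist_triangle x z v
          have hTrt : T - r - t = r := by rw [hr, htdef]; ring
          linarith
        · push_neg at hv1
          have htri := dist_triangle x v z
          rw [dist_comm v z] at htri
          linarith
  have hcount : porCount A (1 / 3 * l ^ 2 * ρ) D k₀ n x = n := by
    unfold porCount
    rw [Finset.sum_congr rfl (fun k hk => if_pos (key k hk))]
    simp [Nat.card_Icc]
  rw [hcount]
  simp
end

section
/- Let X be a separable metric space and suppose A ⊆ X satisfies por(A,x,r) > ρ for all x ∈ A and all 0 < r < r_p, where 0 < ρ < 1 and r_p > 0. Let D > 1 and choose k_0 ∈ ℕ with D^{-k_0} < r_p. Then A is (ρ, D, p, n_0, k_0)-mean porous with n_0 = −⌊log ρ / log D⌋ and p = (1/2) n_0^{-1} = −(1/2) ⌊log ρ / log D⌋^{-1}, where ⌊a⌋ denotes the greatest integer i with i ≤ a. -/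
open Metric MeasureTheory Set Filter
open scoped ENNReal NNReal Topology

/-- Suppose `por A x r > ρ` for all `x ∈ A` and `0 < r < r_p`, where
`0 < ρ < 1`. Let `D > 1` and let `k₀ ∈ ℕ` satisfy `D^{-k₀} < r_p`. Then `A` is
`(ρ, D, p, n₀, k₀)`-mean porous with `n₀ = -⌊log ρ / log D⌋` and
`p = -(1/2) ⌊log ρ / log D⌋⁻¹`. -/
theorem stmt18 {X : Type*} [MetricSpace X] [TopologicalSpace.SeparableSpace X]
    (A : Set X) (ρ rp D : ℝ) (hρ : 0 < ρ) (hρ1 : ρ < 1) (hrp : 0 < rp) (hD : 1 < D)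
    (hpor : ∀ x ∈ A, ∀ r : ℝ, 0 < r → r < rp → ρ < por A x r)
    (k₀ : ℕ) (hk₀ : D ^ (-(k₀ : ℝ)) < rp) :
    MeanPorous A ρ D (-(1 / 2) * ((⌊Real.log ρ / Real.log D⌋ : ℝ))⁻¹)
      (-⌊Real.log ρ / Real.log D⌋).toNat k₀ := by
  intro x hxA n hn
  have hD0 : (0:ℝ) < D := one_pos.trans hD
  have hlogD : 0 < Real.log D := Real.log_pos hD
  have hlogρ : Real.log ρ < 0 := Real.log_neg hρ hρ1
  set m : ℤ := ⌊Real.log ρ / Real.log D⌋ with hm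
  have hmle : (m:ℝ) ≤ Real.log ρ / Real.log D := Int.floor_le _
  have hmneg : m < 0 := by
    have h1 : Real.log ρ / Real.log D < 0 := div_neg_of_neg_of_pos hlogρ hlogD
    have h2 : (m:ℝ) < 0 := hmle.trans_lt h1
    exact_mod_cast h2
  set n₀ : ℕ := (-m).toNat with hn₀def
  have hn₀m : (n₀:ℤ) = -m := Int.toNat_of_nonneg (by omega)
  have hn₀pos : 0 < n₀ := by omega
  have hn₀R : (n₀:ℝ) = -(m:ℝ) := by exact_mod_cast congrArg (Int.cast : ℤ → ℝ) hn₀m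
  have hDm : D ^ (m:ℝ) ≤ ρ := by
    have h1 : (m:ℝ) * Real.log D ≤ Real.log ρ := (le_div_iff₀ hlogD).mp hmle
    calc D ^ (m:ℝ) = Real.exp (Real.log D * (m:ℝ)) := Real.rpow_def_of_pos hD0 _
      _ ≤ Real.exp (Real.log ρ) := Real.exp_le_exp.mpr (by linarith [h1, mul_comm (m:ℝ) (Real.log D)])
      _ = ρ := Real.exp_log hρ
  -- Block lemma
  have hblock : ∀ k : ℕ, k₀ + 1 ≤ k → ∃ j : ℕ, (k ≤ j ∧ j ≤ k + n₀ - 1) ∧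
      ∃ y : X, (D ^ (-(j : ℝ)) < dist x y ∧ dist x y ≤ D ^ (-(j : ℝ) + 1)) ∧
        ρ * dist y x ≤ Metric.infDist y A := by
    intro k hk
    set r : ℝ := D ^ (-(k:ℝ) + 1) with hrdef
    have hrpos : 0 < r := Real.rpow_pos_of_pos hD0 _
    have hrlt : r < rp := by
      have h1 : r ≤ D ^ (-(k₀:ℝ)) := by
        apply Real.rpow_le_rpow_of_exponent_le hD.le
        have : (k₀:ℝ) + 1 ≤ (k:ℝ) := by exact_mod_cast hk
        linarith
      linarith
    have hsup := hpor x hxA r hrpos hrlt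
    unfold por at hsup
    have hex : ∃ ρ', (0 ≤ ρ' ∧ ∃ y : X, closedBall y (ρ' * r) ∩ A = ∅ ∧
        ρ' * r + dist x y ≤ r) ∧ ρ < ρ' := by
      by_contra h
      push_neg at h
      exact absurd (Real.sSup_le (fun a ha => h a ha) hρ.le) (not_le.mpr hsup)
    obtain ⟨ρ', ⟨hρ'0, y, hball, hsum⟩, hρρ'⟩ := hex
    have hρ'rpos : 0 < ρ' * r := mul_pos (hρ.trans hρρ') hrpos
    have hxnball : ρ' * r < dist x y := by
      by_contra h
      push_neg at h
      have hmem : x ∈ closedBall y (ρ' * r) ∩ A := ⟨Metric.mem_closedBall.mpr h, hxA⟩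
      rw [hball] at hmem
      exact hmem
    have hdle : dist x y ≤ r := by linarith
    have hinf : ρ' * r ≤ Metric.infDist y A := by
      by_contra h
      push_neg at h
      obtain ⟨z, hzA, hz⟩ := (Metric.infDist_lt_iff ⟨x, hxA⟩).mp h
      have hmem : z ∈ closedBall y (ρ' * r) ∩ A :=
        ⟨Metric.mem_closedBall.mpr (by rw [dist_comm]; exact hz.le), hzA⟩
      rw [hball] at hmem
      exact hmem
    set J : ℕ := k + n₀ - 1 with hJdef
    have hkJ : k ≤ J := by omega
    have hlow : D ^ (-(J:ℝ)) < dist x y := by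
      have hcast : -(J:ℝ) = (m:ℝ) + (-(k:ℝ) + 1) := by
        have h1 : (J:ℝ) = (k:ℝ) + (n₀:ℝ) - 1 := by
          rw [hJdef]
          push_cast [Nat.cast_sub (show 1 ≤ k + n₀ by omega)]
          ring
        rw [h1, hn₀R]; ring
      rw [hcast, Real.rpow_add hD0]
      calc D ^ (m:ℝ) * D ^ (-(k:ℝ) + 1) ≤ ρ * r :=
            mul_le_mul_of_nonneg_right hDm hrpos.le
        _ < ρ' * r := mul_lt_mul_of_pos_right hρρ' hrpos
        _ < dist x y := hxnball
    classical
    have hTne : ((Finset.Icc k J).filter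
        (fun j : ℕ => dist x y ≤ D ^ (-(j:ℝ) + 1))).Nonempty :=
      ⟨k, Finset.mem_filter.mpr ⟨Finset.mem_Icc.mpr ⟨le_refl k, hkJ⟩, hdle⟩⟩
    set j := ((Finset.Icc k J).filter
        (fun j : ℕ => dist x y ≤ D ^ (-(j:ℝ) + 1))).max' hTne with hjdef
    have hjT : j ∈ (Finset.Icc k J).filter
        (fun j : ℕ => dist x y ≤ D ^ (-(j:ℝ) + 1)) := Finset.max'_mem _ hTne
    rw [Finset.mem_filter, Finset.mem_Icc] at hjT
    obtain ⟨⟨hkj, hjJ⟩, hjd⟩ := hjT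
    refine ⟨j, ⟨hkj, by omega⟩, y, ⟨?_, hjd⟩, ?_⟩
    · rcases eq_or_lt_of_le hjJ with heq | hlt
      · rw [heq]; exact hlow
      · have hnotT : j + 1 ∉ (Finset.Icc k J).filter
            (fun j : ℕ => dist x y ≤ D ^ (-(j:ℝ) + 1)) := fun hmem => by
          have h9 : j + 1 ≤ j := Finset.le_max' _ (j+1) hmem
          omega
        have hnle : ¬ dist x y ≤ D ^ (-((j+1 : ℕ):ℝ) + 1) := fun hle =>
          hnotT (Finset.mem_filter.mpr ⟨Finset.mem_Icc.mpr ⟨by omega, by omega⟩, hle⟩)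
        push_neg at hnle
        have hcast : (-((j+1 : ℕ):ℝ) + 1) = -(j:ℝ) := by push_cast; ring
        rw [hcast] at hnle
        exact hnle
    · rw [dist_comm]
      calc ρ * dist x y ≤ ρ * r := mul_le_mul_of_nonneg_left hdle hρ.le
        _ ≤ ρ' * r := mul_le_mul_of_nonneg_right hρρ'.le hrpos.le
        _ ≤ _ := hinf
  -- Counting
  set q : ℕ := n / n₀ with hqdef
  have hq1 : 1 ≤ q := (Nat.one_le_div_iff hn₀pos).mpr hn
  have hf : ∀ i : ℕ, ∃ j : ℕ,
      ((k₀ + 1 + i * n₀) ≤ j ∧ j ≤ (k₀ + 1 + i * n₀) + n₀ - 1) ∧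
      ∃ y : X, (D ^ (-(j : ℝ)) < dist x y ∧ dist x y ≤ D ^ (-(j : ℝ) + 1)) ∧
        ρ * dist y x ≤ Metric.infDist y A :=
    fun i => hblock (k₀ + 1 + i * n₀) (by omega)
  choose f hf1 hf2 using hf
  classical
  set Jset := (Finset.range q).image f with hJset
  have hqn : q * n₀ ≤ n := Nat.div_mul_le_self n n₀
  have hJI : Jset ⊆ Finset.Icc (k₀ + 1) (k₀ + n) := by
    intro j hj
    rw [hJset, Finset.mem_image] at hj
    obtain ⟨i, hi, rfl⟩ := hj
    rw [Finset.mem_range] at hi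
    have h1 := (hf1 i).1
    have h2 := (hf1 i).2
    have hi1 : (i+1) * n₀ ≤ q * n₀ := Nat.mul_le_mul_right _ (by omega)
    have hmul : (i+1) * n₀ = i * n₀ + n₀ := Nat.succ_mul i n₀
    rw [Finset.mem_Icc]
    omega
  have hinj : Set.InjOn f (Finset.range q) := by
    have key : ∀ a b : ℕ, a < b → f a ≠ f b := by
      intro a b hlt
      have h1 := (hf1 a).2
      have h2 := (hf1 b).1
      have h3 : (a+1) * n₀ ≤ b * n₀ := Nat.mul_le_mul_right _ (by omega)
      have hmul : (a+1) * n₀ = a * n₀ + n₀ := Nat.succ_mul a n₀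
      omega
    intro a _ b _ hab
    rcases lt_trichotomy a b with h | h | h
    · exact absurd hab (key a b h)
    · exact h
    · exact absurd hab.symm (key b a h)
  have hcard : Jset.card = q := by
    rw [hJset, Finset.card_image_of_injOn hinj, Finset.card_range]
  have hsum : q ≤ porCount A ρ D k₀ n x := by
    unfold porCount
    calc q = ∑ _j ∈ Jset, 1 := by rw [Finset.sum_const, smul_eq_mul, mul_one, hcard]
      _ = ∑ j ∈ Jset, (if ∃ y : X, (D ^ (-(j : ℝ)) < dist x y ∧
            dist x y ≤ D ^ (-(j : ℝ) + 1)) ∧ ρ * dist y x ≤ Metric.infDist y A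
            then 1 else 0) := by
          apply Finset.sum_congr rfl
          intro j hj
          rw [hJset, Finset.mem_image] at hj
          obtain ⟨i, _, rfl⟩ := hj
          rw [if_pos (hf2 i)]
      _ ≤ _ := Finset.sum_le_sum_of_subset hJI
  -- Final arithmetic
  have hcastp : (-(1 / 2) * ((m : ℝ))⁻¹) = (1/2) * ((n₀:ℝ))⁻¹ := by
    rw [hn₀R, inv_neg]; ring
  rw [hcastp]
  have hn2 : (n:ℝ) ≤ 2 * (n₀:ℝ) * (q:ℝ) := by
    have h1 : n₀ * q + n % n₀ = n := Nat.div_add_mod n n₀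
    have h2 : n % n₀ < n₀ := Nat.mod_lt n hn₀pos
    have h3 : n₀ ≤ n₀ * q := Nat.le_mul_of_pos_right n₀ hq1
    have h4 : n ≤ 2 * (n₀ * q) := by omega
    have h5 : (n:ℝ) ≤ 2 * ((n₀:ℝ) * (q:ℝ)) := by exact_mod_cast h4
    linarith
  have hstep : (1/2) * ((n₀:ℝ))⁻¹ * n ≤ (q:ℝ) := by
    have hpos : (0:ℝ) < 2 * (n₀:ℝ) := by positivity
    rw [show (1/2) * ((n₀:ℝ))⁻¹ * (n:ℝ) = (n:ℝ) / (2 * (n₀:ℝ)) by ring,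
      div_le_iff₀ hpos]
    linarith
  calc (1/2) * ((n₀:ℝ))⁻¹ * n ≤ (q:ℝ) := hstep
    _ ≤ (porCount A ρ D k₀ n x : ℝ) := by exact_mod_cast hsum
end
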